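/- Local invertibility for the discrete trigonometric moment map: let T ≥ 1, N ≥ 2T, and α = (α₁,…,α_T) ∈ ℂ^T with ‖α‖₂ ≤ 1/(8T^{3/2}). Then there exist real angles θ₁,…,θ_{2T} such that α_k = (1/(2T))·Σ_{l=1}^{2T} e^{ikθ_l} for all 1 ≤ k ≤ T. -/

import Mathlib

open Finset Polynomial Complex
namespace DTMLI


noncomputable def aseq (pw : ℕ → ℂ) : ℕ → ℂ
  | 0 => 1
  | k + 1 => (-((k : ℂ) + 1)⁻¹) * ∑ i ∈ Finset.range (k + 1), pw (i + 1) * aseq pw (k - i)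
  decreasing_by exact Nat.lt_succ_of_le (Nat.sub_le _ _)

lemma aseq_zero (pw : ℕ → ℂ) : aseq pw 0 = 1 := by rw [aseq]

lemma aseq_succ (pw : ℕ → ℂ) (k : ℕ) :
    aseq pw (k + 1) = (-((k : ℂ) + 1)⁻¹) * ∑ i ∈ Finset.range (k + 1), pw (i + 1) * aseq pw (k - i) := by
  rw [aseq]

/-- Newton-style recursion satisfied by `aseq`. -/
lemma aseq_newton (pw : ℕ → ℂ) (k : ℕ) :
    ((k : ℂ) + 1) * aseq pw (k + 1)
      = - ∑ i ∈ Finset.range (k + 1), pw (i + 1) * aseq pw (k - i) := by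
  rw [aseq_succ]
  have h : ((k : ℂ) + 1) ≠ 0 := Nat.cast_add_one_ne_zero k
  field_simp

lemma abs_aseq_succ_le (pw : ℕ → ℂ) (k : ℕ) :
    ‖aseq pw (k + 1)‖
      ≤ ∑ i ∈ Finset.range (k + 1), ‖pw (i + 1)‖ * ‖aseq pw (k - i)‖ := by
  rw [aseq_succ, norm_mul]
  have h1 : ‖-((k : ℂ) + 1)⁻¹‖ ≤ 1 := by
    rw [norm_neg, norm_inv]
    rw [inv_le_one_iff₀]
    right
    rw [show ((k : ℂ) + 1) = ((k + 1 : ℕ) : ℂ) by push_cast; ring, Complex.norm_natCast]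
    exact_mod_cast Nat.succ_le_succ (Nat.zero_le k)
  calc ‖-((k : ℂ) + 1)⁻¹‖ * ‖∑ i ∈ Finset.range (k + 1), pw (i + 1) * aseq pw (k - i)‖
      ≤ 1 * ‖∑ i ∈ Finset.range (k + 1), pw (i + 1) * aseq pw (k - i)‖ :=
        mul_le_mul_of_nonneg_right h1 (by positivity)
    _ = ‖∑ i ∈ Finset.range (k + 1), pw (i + 1) * aseq pw (k - i)‖ := one_mul _
    _ ≤ ∑ i ∈ Finset.range (k + 1), ‖pw (i + 1) * aseq pw (k - i)‖ :=
        norm_sum_le _ _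
    _ = ∑ i ∈ Finset.range (k + 1), ‖pw (i + 1)‖ * ‖aseq pw (k - i)‖ := by
        simp [map_mul]

/-- triangular sum swap -/
lemma tri_swap (f : ℕ → ℕ → ℝ) (T : ℕ) :
    ∑ k ∈ Finset.range T, ∑ i ∈ Finset.range (k + 1), f i (k - i)
      = ∑ i ∈ Finset.range T, ∑ m ∈ Finset.range (T - i), f i m := by
  rw [Finset.sum_sigma', Finset.sum_sigma']
  apply Finset.sum_nbij' (fun x => ⟨x.2, x.1 - x.2⟩) (fun y => ⟨y.1 + y.2, y.1⟩)
  · rintro ⟨k, i⟩ h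
    simp only [Finset.mem_sigma, Finset.mem_range] at h ⊢
    omega
  · rintro ⟨i, m⟩ h
    simp only [Finset.mem_sigma, Finset.mem_range] at h ⊢
    omega
  · rintro ⟨k, i⟩ h
    simp only [Finset.mem_sigma, Finset.mem_range] at h
    simp only [Sigma.mk.inj_iff]
    constructor
    · first | trivial | omega
    · exact heq_of_eq (by omega)
  · rintro ⟨i, m⟩ h
    simp only [Finset.mem_sigma, Finset.mem_range] at h
    simp only [Sigma.mk.inj_iff]
    constructor
    · trivial
    · exact heq_of_eq (by omega)
  · rintro ⟨k, i⟩ h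
    simp only [Finset.mem_sigma, Finset.mem_range] at h
    rfl

lemma aseq_sum_bound (pw : ℕ → ℂ) (T : ℕ)
    (hS : ∑ j ∈ Finset.range T, ‖pw (j + 1)‖ ≤ 1 / 4) :
    ∑ k ∈ Finset.range T, ‖aseq pw (k + 1)‖ ≤ 1 / 3 := by
  set S := ∑ j ∈ Finset.range T, ‖pw (j + 1)‖ with hSdef
  set A := ∑ k ∈ Finset.range T, ‖aseq pw (k + 1)‖ with hAdef
  have hS0 : 0 ≤ S := Finset.sum_nonneg fun _ _ => norm_nonneg _
  have hA0 : 0 ≤ A := Finset.sum_nonneg fun _ _ => norm_nonneg _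
  have key : A ≤ S * (1 + A) := by
    have h1 : A ≤ ∑ k ∈ Finset.range T, ∑ i ∈ Finset.range (k + 1),
        ‖pw (i + 1)‖ * ‖aseq pw (k - i)‖ :=
      Finset.sum_le_sum fun k _ => abs_aseq_succ_le pw k
    have h2 : ∑ k ∈ Finset.range T, ∑ i ∈ Finset.range (k + 1),
        ‖pw (i + 1)‖ * ‖aseq pw (k - i)‖
        = ∑ i ∈ Finset.range T, ∑ m ∈ Finset.range (T - i),
            ‖pw (i + 1)‖ * ‖aseq pw m‖ :=
      tri_swap (fun i m => ‖pw (i + 1)‖ * ‖aseq pw m‖) T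
    have h3 : ∀ i ∈ Finset.range T, ∑ m ∈ Finset.range (T - i),
        ‖pw (i + 1)‖ * ‖aseq pw m‖
        ≤ ‖pw (i + 1)‖ * (1 + A) := by
      intro i hi
      rw [← Finset.mul_sum]
      apply mul_le_mul_of_nonneg_left _ (norm_nonneg _)
      -- ∑ m ∈ range (T - i), |a m| ≤ 1 + A
      have hsub : ∑ m ∈ Finset.range (T - i), ‖aseq pw m‖
          ≤ ∑ m ∈ Finset.range T, ‖aseq pw m‖ := by
        apply Finset.sum_le_sum_of_subset_of_nonneg
        · exact Finset.range_subset_range.2 (Nat.sub_le _ _)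
        · intro _ _ _; exact norm_nonneg _
      refine hsub.trans ?_
      cases T with
      | zero => simp [hAdef]
      | succ n =>
        rw [Finset.sum_range_succ']
        rw [aseq_zero]
        simp only [norm_one]
        have : ∑ m ∈ Finset.range n, ‖aseq pw (m + 1)‖ ≤ A := by
          rw [hAdef]
          apply Finset.sum_le_sum_of_subset_of_nonneg
          · exact Finset.range_subset_range.2 (Nat.le_succ n)
          · intro _ _ _; exact norm_nonneg _
        linarith
    calc A ≤ _ := h1
      _ = _ := h2
      _ ≤ ∑ i ∈ Finset.range T, ‖pw (i + 1)‖ * (1 + A) := Finset.sum_le_sum h3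
      _ = S * (1 + A) := by rw [← Finset.sum_mul]
  nlinarith



noncomputable def Qpoly (T : ℕ) (a : ℕ → ℂ) (lam : ℂ) : Polynomial ℂ :=
  (∑ k ∈ Finset.range (T + 1), Polynomial.C (a k) * Polynomial.X ^ (2 * T - k))
  + ∑ k ∈ Finset.range T, Polynomial.C (lam * (starRingEnd ℂ) (a k)) * Polynomial.X ^ k

lemma Qpoly_coeff_high (T : ℕ) (hT : 1 ≤ T) (a : ℕ → ℂ) (lam : ℂ) {m : ℕ} (hm : m ≤ T) :
    (Qpoly T a lam).coeff (2 * T - m) = a m := by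
  rw [Qpoly]
  rw [Polynomial.coeff_add, Polynomial.finset_sum_coeff, Polynomial.finset_sum_coeff]
  simp only [Polynomial.coeff_C_mul, Polynomial.coeff_X_pow]
  have h2 : ∀ k ∈ Finset.range T, lam * (starRingEnd ℂ) (a k) * (if (2 * T - m : ℕ) = k then 1 else 0) = 0 := by
    intro k hk
    rw [Finset.mem_range] at hk
    rw [if_neg (by omega), mul_zero]
  rw [Finset.sum_eq_zero h2, add_zero]
  rw [Finset.sum_eq_single m]
  · rw [if_pos rfl, mul_one]
  · intro k hk hkm
    rw [Finset.mem_range] at hk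
    rw [if_neg (by omega), mul_zero]
  · intro h
    exact absurd (Finset.mem_range.2 (by omega)) h

lemma Qpoly_natDegree_le (T : ℕ) (a : ℕ → ℂ) (lam : ℂ) :
    (Qpoly T a lam).natDegree ≤ 2 * T := by
  rw [Qpoly]
  apply (Polynomial.natDegree_add_le _ _).trans
  simp only [max_le_iff]
  constructor
  · apply Polynomial.natDegree_sum_le_of_forall_le
    intro k hk
    apply (Polynomial.natDegree_C_mul_le _ _).trans
    simp only [Polynomial.natDegree_X_pow]
    omega
  · apply Polynomial.natDegree_sum_le_of_forall_le
    intro k hk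
    rw [Finset.mem_range] at hk
    apply (Polynomial.natDegree_C_mul_le _ _).trans
    simp only [Polynomial.natDegree_X_pow]
    omega

lemma Qpoly_monic (T : ℕ) (hT : 1 ≤ T) (a : ℕ → ℂ) (ha0 : a 0 = 1) (lam : ℂ) :
    (Qpoly T a lam).Monic := by
  have h := Qpoly_coeff_high T hT a lam (Nat.zero_le T)
  rw [Nat.sub_zero, ha0] at h
  exact Polynomial.monic_of_natDegree_le_of_coeff_eq_one _ (Qpoly_natDegree_le T a lam) h

lemma Qpoly_natDegree (T : ℕ) (hT : 1 ≤ T) (a : ℕ → ℂ) (ha0 : a 0 = 1) (lam : ℂ) :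
    (Qpoly T a lam).natDegree = 2 * T := by
  refine le_antisymm (Qpoly_natDegree_le T a lam) ?_
  apply Polynomial.le_natDegree_of_ne_zero
  have h := Qpoly_coeff_high T hT a lam (Nat.zero_le T)
  rw [Nat.sub_zero, ha0] at h
  rw [h]; exact one_ne_zero

lemma Qpoly_eval (T : ℕ) (a : ℕ → ℂ) (lam : ℂ) (z : ℂ) :
    (Qpoly T a lam).eval z
      = (∑ k ∈ Finset.range (T + 1), a k * z ^ (2 * T - k))
        + ∑ k ∈ Finset.range T, lam * (starRingEnd ℂ) (a k) * z ^ k := by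
  simp [Qpoly, Polynomial.eval_finset_sum]

noncomputable def hfun (T : ℕ) (a : ℕ → ℂ) (μ : ℂ) : ℝ → ℝ := fun θ =>
  2 * (μ * Complex.exp ((T : ℝ) * θ * Complex.I)).re + (μ * a T).re
  + ∑ k ∈ Finset.Ico 1 T, 2 * (μ * a k * Complex.exp ((((T - k : ℕ)) : ℝ) * θ * Complex.I)).re

lemma hfun_continuous (T : ℕ) (a : ℕ → ℂ) (μ : ℂ) : Continuous (hfun T a μ) := by
  unfold hfun
  apply Continuous.add
  apply Continuous.add
  · apply Continuous.mul continuous_const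
    apply Complex.continuous_re.comp
    apply Continuous.mul continuous_const
    apply Complex.continuous_exp.comp
    exact ((continuous_const.mul Complex.continuous_ofReal).mul continuous_const)
  · exact continuous_const
  · apply continuous_finset_sum
    intro k _
    apply Continuous.mul continuous_const
    apply Complex.continuous_re.comp
    apply Continuous.mul continuous_const
    apply Complex.continuous_exp.comp
    exact ((continuous_const.mul Complex.continuous_ofReal).mul continuous_const)

lemma hfun_eq (T : ℕ) (hT : 1 ≤ T) (a : ℕ → ℂ) (ha0 : a 0 = 1) (μ : ℂ)
    (hμ1 : μ * (starRingEnd ℂ) μ = 1)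
    (hrT : (((μ * a T).re : ℝ) : ℂ) = μ * a T) (θ : ℝ) :
    ((hfun T a μ θ : ℝ) : ℂ)
      = μ * Complex.exp (-((T : ℝ) * θ) * Complex.I)
          * (Qpoly T a ((starRingEnd ℂ) μ ^ 2)).eval (Complex.exp (θ * Complex.I)) := by
  rw [Qpoly_eval]
  set lam := (starRingEnd ℂ) μ ^ 2 with hlam
  -- rewrite powers of exp
  have hpow : ∀ n : ℕ, (Complex.exp (θ * Complex.I)) ^ n = Complex.exp ((n : ℝ) * θ * Complex.I) := by
    intro n
    rw [← Complex.exp_nat_mul]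
    congr 1
    push_cast
    ring
  -- first sum termwise for k < T
  have hterm1 : ∀ k, k ≤ T →
      μ * Complex.exp (-((T : ℝ) * θ) * Complex.I) * (a k * (Complex.exp (θ * Complex.I)) ^ (2 * T - k))
        = μ * a k * Complex.exp ((((T - k : ℕ)) : ℝ) * θ * Complex.I) := by
    intro k hk
    rw [hpow]
    have : Complex.exp (-((T : ℝ) * θ) * Complex.I) * Complex.exp (((2 * T - k : ℕ) : ℝ) * θ * Complex.I)
        = Complex.exp ((((T - k : ℕ)) : ℝ) * θ * Complex.I) := by
      rw [← Complex.exp_add]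
      congr 1
      have h1 : ((2 * T - k : ℕ) : ℝ) = 2 * T - k := by
        push_cast [Nat.cast_sub (by omega : k ≤ 2 * T)]; ring
      have h2 : (((T - k : ℕ)) : ℝ) = T - k := by
        push_cast [Nat.cast_sub hk]; ring
      rw [h1, h2]
      push_cast
      ring
    calc μ * Complex.exp (-((T : ℝ) * θ) * Complex.I) * (a k * Complex.exp (((2 * T - k : ℕ) : ℝ) * θ * Complex.I))
        = μ * a k * (Complex.exp (-((T : ℝ) * θ) * Complex.I) * Complex.exp (((2 * T - k : ℕ) : ℝ) * θ * Complex.I)) := by ring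
      _ = μ * a k * Complex.exp ((((T - k : ℕ)) : ℝ) * θ * Complex.I) := by rw [this]
  -- second sum termwise: k < T
  have hterm2 : ∀ k, k < T →
      μ * Complex.exp (-((T : ℝ) * θ) * Complex.I) * (lam * (starRingEnd ℂ) (a k) * (Complex.exp (θ * Complex.I)) ^ k)
        = (starRingEnd ℂ) (μ * a k * Complex.exp ((((T - k : ℕ)) : ℝ) * θ * Complex.I)) := by
    intro k hk
    rw [hpow]
    rw [map_mul, map_mul]
    have hconjexp : (starRingEnd ℂ) (Complex.exp ((((T - k : ℕ)) : ℝ) * θ * Complex.I))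
        = Complex.exp (-((((T - k : ℕ)) : ℝ) * θ * Complex.I)) := by
      rw [← Complex.exp_conj]
      congr 1
      simp [Complex.conj_I]
    rw [hconjexp]
    have hexp : Complex.exp (-((T : ℝ) * θ) * Complex.I) * Complex.exp (((k : ℕ) : ℝ) * θ * Complex.I)
        = Complex.exp (-((((T - k : ℕ)) : ℝ) * θ * Complex.I)) := by
      rw [← Complex.exp_add]
      congr 1
      have h2 : (((T - k : ℕ)) : ℝ) = T - k := by
        push_cast [Nat.cast_sub (le_of_lt hk)]; ring
      rw [h2]
      push_cast
      ring
    have hmul : μ * lam = (starRingEnd ℂ) μ := by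
      rw [hlam]
      calc μ * (starRingEnd ℂ) μ ^ 2 = (μ * (starRingEnd ℂ) μ) * (starRingEnd ℂ) μ := by ring
        _ = (starRingEnd ℂ) μ := by rw [hμ1, one_mul]
    calc μ * Complex.exp (-((T : ℝ) * θ) * Complex.I) * (lam * (starRingEnd ℂ) (a k) * Complex.exp (((k : ℕ) : ℝ) * θ * Complex.I))
        = (μ * lam) * (starRingEnd ℂ) (a k) * (Complex.exp (-((T : ℝ) * θ) * Complex.I) * Complex.exp (((k : ℕ) : ℝ) * θ * Complex.I)) := by ring
      _ = (starRingEnd ℂ) μ * (starRingEnd ℂ) (a k) * Complex.exp (-((((T - k : ℕ)) : ℝ) * θ * Complex.I)) := by rw [hmul, hexp]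
  -- abbreviation
  set u : ℕ → ℂ := fun k => μ * a k * Complex.exp ((((T - k : ℕ)) : ℝ) * θ * Complex.I) with hu
  -- expand RHS
  rw [mul_add, Finset.mul_sum, Finset.mul_sum, Finset.sum_range_succ]
  have hs1 : ∑ k ∈ Finset.range T,
      μ * Complex.exp (-((T : ℝ) * θ) * Complex.I) * (a k * (Complex.exp (θ * Complex.I)) ^ (2 * T - k))
      = ∑ k ∈ Finset.range T, u k :=
    Finset.sum_congr rfl fun k hk => hterm1 k (le_of_lt (Finset.mem_range.1 hk))
  have hs2 : ∑ k ∈ Finset.range T,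
      μ * Complex.exp (-((T : ℝ) * θ) * Complex.I) * (lam * (starRingEnd ℂ) (a k) * (Complex.exp (θ * Complex.I)) ^ k)
      = ∑ k ∈ Finset.range T, (starRingEnd ℂ) (u k) :=
    Finset.sum_congr rfl fun k hk => hterm2 k (Finset.mem_range.1 hk)
  have hsT : μ * Complex.exp (-((T : ℝ) * θ) * Complex.I) * (a T * (Complex.exp (θ * Complex.I)) ^ (2 * T - T))
      = μ * a T := by
    rw [hterm1 T le_rfl]
    simp [hu]
  rw [hs1, hs2, hsT]
  -- LHS
  unfold hfun
  simp only [Complex.ofReal_add, Complex.ofReal_mul, Complex.ofReal_sum, Complex.ofReal_ofNat]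
  have l1 : (2 : ℂ) * ((μ * Complex.exp ((T : ℝ) * θ * Complex.I)).re : ℝ) = u 0 + (starRingEnd ℂ) (u 0) := by
    have h0 : u 0 = μ * Complex.exp ((T : ℝ) * θ * Complex.I) := by
      simp [hu, ha0]
    rw [h0, Complex.add_conj]
    simp only [Complex.ofReal_mul, Complex.ofReal_ofNat]
  have l2 : ∑ k ∈ Finset.Ico 1 T,
      (2 : ℂ) * (((μ * a k * Complex.exp ((((T - k : ℕ)) : ℝ) * θ * Complex.I)).re : ℝ) : ℂ)
      = ∑ k ∈ Finset.Ico 1 T, (u k + (starRingEnd ℂ) (u k)) := by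
    refine Finset.sum_congr rfl fun k hk => ?_
    rw [Complex.add_conj]
    simp only [Complex.ofReal_mul, Complex.ofReal_ofNat]
    rfl
  have l3 : ∑ k ∈ Finset.range T, u k + ∑ k ∈ Finset.range T, (starRingEnd ℂ) (u k)
      = (u 0 + (starRingEnd ℂ) (u 0)) + ∑ k ∈ Finset.Ico 1 T, (u k + (starRingEnd ℂ) (u k)) := by
    rw [← Finset.sum_add_distrib, Finset.range_eq_Ico,
      Finset.sum_eq_sum_Ico_succ_bot (by omega : 0 < T)]
  rw [l1, l2, hrT]
  rw [mul_comm (μ * Complex.exp (-((T : ℝ) * θ) * Complex.I)) (a T * (Complex.exp (θ * Complex.I)) ^ (2 * T - T))] at hsT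
  -- goal is now an algebraic identity
  rw [show ∑ k ∈ Finset.range T, u k + μ * a T + ∑ k ∈ Finset.range T, (starRingEnd ℂ) (u k)
      = (∑ k ∈ Finset.range T, u k + ∑ k ∈ Finset.range T, (starRingEnd ℂ) (u k)) + μ * a T by ring, l3]
  ring



lemma exists_mu (c : ℂ) : ∃ μ : ℂ, ‖μ‖ = 1 ∧ (((μ * c).re : ℝ) : ℂ) = μ * c := by
  by_cases hc : c = 0
  · exact ⟨1, by simp [hc]⟩
  · have habs : (‖c‖) ≠ 0 := norm_ne_zero_iff.mpr hc
    refine ⟨(starRingEnd ℂ) c / (‖c‖ : ℝ), ?_, ?_⟩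
    · rw [norm_div, Complex.norm_conj, Complex.norm_real, Real.norm_eq_abs, abs_of_pos (norm_pos_iff.mpr hc),
        div_self habs]
    · have h1 : (starRingEnd ℂ) c / (‖c‖ : ℝ) * c = ((‖c‖ : ℝ) : ℂ) := by
        have habs' : ((‖c‖ : ℝ) : ℂ) ≠ 0 := by
          simpa using habs
        field_simp
        rw [mul_comm, Complex.mul_conj]
        norm_cast
        rw [← Complex.sq_norm]
      rw [h1, Complex.ofReal_re]

lemma node_val (T : ℕ) (hT : 1 ≤ T) (μ : ℂ) (hμ1 : ‖μ‖ = 1) (m : ℕ) (θ : ℝ)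
    (hθ : (T : ℝ) * θ = (m : ℝ) * Real.pi - Complex.arg μ) :
    μ * Complex.exp ((T : ℝ) * (θ : ℂ) * Complex.I) = ((-1 : ℂ)) ^ m := by
  have hμ : Complex.exp ((Complex.arg μ : ℝ) * Complex.I) = μ := by
    have := Complex.norm_mul_exp_arg_mul_I μ
    rwa [hμ1, Complex.ofReal_one, one_mul] at this
  have harg : ((T : ℝ) : ℂ) * (θ : ℂ) * Complex.I = (((m : ℝ) * Real.pi - Complex.arg μ : ℝ) : ℂ) * Complex.I := by
    congr 1
    rw [show ((T : ℝ) : ℂ) * (θ : ℂ) = (((T : ℝ) * θ : ℝ) : ℂ) by push_cast; ring, hθ]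
  rw [harg]
  calc μ * Complex.exp (((m : ℝ) * Real.pi - Complex.arg μ : ℝ) * Complex.I)
      = Complex.exp ((Complex.arg μ : ℝ) * Complex.I)
        * Complex.exp (((m : ℝ) * Real.pi - Complex.arg μ : ℝ) * Complex.I) := by rw [hμ]
    _ = Complex.exp ((m : ℂ) * ((Real.pi : ℝ) * Complex.I)) := by
        rw [← Complex.exp_add]
        congr 1
        push_cast
        ring
    _ = (Complex.exp ((Real.pi : ℝ) * Complex.I)) ^ m := by
        rw [← Complex.exp_nat_mul]
    _ = ((-1 : ℂ)) ^ m := by rw [Complex.exp_pi_mul_I]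


lemma exists_angles (T : ℕ) (hT : 1 ≤ T) (a : ℕ → ℂ) (ha0 : a 0 = 1)
    (hA : ∑ k ∈ Finset.range T, ‖a (k + 1)‖ ≤ 1 / 3) :
    ∃ (lam : ℂ) (θ : Fin (2 * T) → ℝ),
      Function.Injective (fun l : Fin (2 * T) => Complex.exp ((θ l : ℂ) * Complex.I)) ∧
      ∀ l : Fin (2 * T), (Qpoly T a lam).eval (Complex.exp ((θ l : ℂ) * Complex.I)) = 0 := by
  obtain ⟨μ, hμ1, hμT⟩ := exists_mu (a T)
  have hπ := Real.pi_pos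
  have hμc : μ * (starRingEnd ℂ) μ = 1 := by
    rw [Complex.mul_conj]
    rw [show Complex.normSq μ = (‖μ‖) ^ 2 from (Complex.sq_norm μ).symm, hμ1]
    norm_num
  have hT0 : (0 : ℝ) < T := by positivity
  have hT0' : (T : ℝ) ≠ 0 := ne_of_gt hT0
  set tstar : ℕ → ℝ := fun m => ((m : ℝ) * Real.pi - Complex.arg μ) / T with htstar
  have htmono : ∀ {m m' : ℕ}, m < m' → tstar m < tstar m' := by
    intro m m' h
    rw [htstar]
    have hmm : (m : ℝ) < (m' : ℝ) := by exact_mod_cast h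
    have : (m : ℝ) * Real.pi < (m' : ℝ) * Real.pi := by nlinarith
    apply div_lt_div_of_pos_right (by linarith) hT0
  have htmono_le : ∀ {m m' : ℕ}, m ≤ m' → tstar m ≤ tstar m' := by
    intro m m' h
    rcases eq_or_lt_of_le h with rfl | h
    · exact le_refl _
    · exact le_of_lt (htmono h)
  have hnode : ∀ m : ℕ, μ * Complex.exp ((T : ℝ) * ((tstar m : ℝ) : ℂ) * Complex.I) = ((-1 : ℂ)) ^ m := by
    intro m
    apply node_val T hT μ hμ1 m
    rw [htstar]
    field_simp
  have hbound : ∀ m : ℕ, |hfun T a μ (tstar m) - 2 * (-1 : ℝ) ^ m| ≤ 2 / 3 := by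
    intro m
    have h1 : hfun T a μ (tstar m) - 2 * (-1 : ℝ) ^ m
        = (μ * a T).re + ∑ k ∈ Finset.Ico 1 T,
            2 * (μ * a k * Complex.exp ((((T - k : ℕ)) : ℝ) * (tstar m : ℂ) * Complex.I)).re := by
      show (2 * (μ * Complex.exp ((T : ℝ) * ((tstar m : ℝ) : ℂ) * Complex.I)).re + (μ * a T).re
        + ∑ k ∈ Finset.Ico 1 T, 2 * (μ * a k * Complex.exp ((((T - k : ℕ)) : ℝ) * (tstar m : ℂ) * Complex.I)).re)
        - 2 * (-1 : ℝ) ^ m = _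
      rw [hnode m]
      rw [show ((-1 : ℂ)) ^ m = (((-1 : ℝ) ^ m : ℝ) : ℂ) by push_cast; ring, Complex.ofReal_re]
      ring
    rw [h1]
    have h2 : |(μ * a T).re| ≤ ‖a T‖ := by
      refine (Complex.abs_re_le_norm _).trans ?_
      rw [norm_mul, hμ1, one_mul]
    have h3 : ∀ k ∈ Finset.Ico 1 T,
        |2 * (μ * a k * Complex.exp ((((T - k : ℕ)) : ℝ) * (tstar m : ℂ) * Complex.I)).re|
          ≤ 2 * ‖a k‖ := by
      intro k hk
      rw [abs_mul, _root_.abs_of_nonneg (by norm_num : (0:ℝ) ≤ 2)]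
      apply mul_le_mul_of_nonneg_left _ (by norm_num)
      refine (Complex.abs_re_le_norm _).trans ?_
      rw [norm_mul, norm_mul, hμ1, one_mul]
      rw [show (((T - k : ℕ) : ℝ) : ℂ) * ((tstar m : ℝ) : ℂ) * Complex.I
          = ((((T - k : ℕ) : ℝ) * tstar m : ℝ) : ℂ) * Complex.I by push_cast; ring]
      rw [Complex.norm_exp_ofReal_mul_I, mul_one]
    calc |(μ * a T).re + ∑ k ∈ Finset.Ico 1 T,
          2 * (μ * a k * Complex.exp ((((T - k : ℕ)) : ℝ) * (tstar m : ℂ) * Complex.I)).re|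
        ≤ |(μ * a T).re| + |∑ k ∈ Finset.Ico 1 T,
            2 * (μ * a k * Complex.exp ((((T - k : ℕ)) : ℝ) * (tstar m : ℂ) * Complex.I)).re| :=
          abs_add_le _ _
      _ ≤ ‖a T‖ + ∑ k ∈ Finset.Ico 1 T, 2 * ‖a k‖ := by
          apply add_le_add h2
          exact (Finset.abs_sum_le_sum_abs _ _).trans (Finset.sum_le_sum h3)
      _ ≤ 2 * ∑ k ∈ Finset.range T, ‖a (k + 1)‖ := by
          have e1 : ∑ k ∈ Finset.Ico 1 (T + 1), ‖a k‖
              = ∑ k ∈ Finset.Ico 1 T, ‖a k‖ + ‖a T‖ :=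
            Finset.sum_Ico_succ_top hT _
          have e2 : ∑ k ∈ Finset.Ico 1 (T + 1), ‖a k‖
              = ∑ k ∈ Finset.range T, ‖a (k + 1)‖ := by
            rw [Finset.sum_Ico_eq_sum_range]
            simp only [Nat.add_sub_cancel]
            exact Finset.sum_congr rfl fun i _ => by rw [Nat.add_comm]
          have e3 : (0:ℝ) ≤ ‖a T‖ := norm_nonneg _
          have e4 : ∑ k ∈ Finset.Ico 1 T, 2 * ‖a k‖
              = 2 * ∑ k ∈ Finset.Ico 1 T, ‖a k‖ := (Finset.mul_sum _ _ _).symm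
          rw [← e2, e1, e4, mul_add]
          linarith
      _ ≤ 2 / 3 := by linarith
  have heven : ∀ m : ℕ, Even m → 4 / 3 ≤ hfun T a μ (tstar m) := by
    intro m hm
    have := hbound m
    rw [hm.neg_one_pow] at this
    have := abs_le.1 this
    linarith [this.1]
  have hodd : ∀ m : ℕ, Odd m → hfun T a μ (tstar m) ≤ -(4 / 3) := by
    intro m hm
    have := hbound m
    rw [hm.neg_one_pow] at this
    have := abs_le.1 this
    linarith [this.2]
  have hzero : ∀ m : ℕ, ∃ x, x ∈ Set.Ioo (tstar m) (tstar (m + 1)) ∧ hfun T a μ x = 0 := by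
    intro m
    have hle : tstar m ≤ tstar (m + 1) := le_of_lt (htmono (Nat.lt_succ_self m))
    rcases Nat.even_or_odd m with hm | hm
    · have h1 := heven m hm
      have h2 := hodd (m + 1) (Even.add_one hm)
      have himg := intermediate_value_Ioo' hle (hfun_continuous T a μ).continuousOn
      have h0 : (0 : ℝ) ∈ Set.Ioo (hfun T a μ (tstar (m + 1))) (hfun T a μ (tstar m)) :=
        ⟨by linarith, by linarith⟩
      obtain ⟨x, hx, hfx⟩ := himg h0
      exact ⟨x, hx, hfx⟩
    · have h1 := hodd m hm
      have h2 := heven (m + 1) (Odd.add_one hm)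
      have himg := intermediate_value_Ioo hle (hfun_continuous T a μ).continuousOn
      have h0 : (0 : ℝ) ∈ Set.Ioo (hfun T a μ (tstar m)) (hfun T a μ (tstar (m + 1))) :=
        ⟨by linarith, by linarith⟩
      obtain ⟨x, hx, hfx⟩ := himg h0
      exact ⟨x, hx, hfx⟩
  set θf : ℕ → ℝ := fun m => (hzero m).choose with hθf
  have hθf1 : ∀ m, θf m ∈ Set.Ioo (tstar m) (tstar (m + 1)) := fun m => (hzero m).choose_spec.1
  have hθf2 : ∀ m, hfun T a μ (θf m) = 0 := fun m => (hzero m).choose_spec.2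
  refine ⟨(starRingEnd ℂ) μ ^ 2, fun l => θf l, ?_, ?_⟩
  · -- injectivity
    have hdiff : ∀ i j : ℕ, i < j → j < 2 * T → 0 < θf j - θf i ∧ θf j - θf i < 2 * Real.pi := by
      intro i j hij hj
      have h1 : θf i < tstar (i + 1) := (hθf1 i).2
      have h2 : tstar (i + 1) ≤ tstar j := htmono_le hij
      have h3 : tstar j < θf j := (hθf1 j).1
      have h4 : θf j < tstar (j + 1) := (hθf1 j).2
      have h5 : tstar (j + 1) ≤ tstar (2 * T) := htmono_le hj
      have h6 : tstar 0 ≤ tstar i := htmono_le (Nat.zero_le i)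
      have h7 : tstar i < θf i := (hθf1 i).1
      have h8 : tstar (2 * T) - tstar 0 = 2 * Real.pi := by
        rw [htstar]
        push_cast
        field_simp
        ring
      constructor <;> [linarith; linarith]
    intro i j hij
    simp only at hij
    by_contra hne
    have key : ∀ i j : Fin (2 * T), (i : ℕ) < (j : ℕ) →
        Complex.exp ((θf i : ℂ) * Complex.I) = Complex.exp ((θf j : ℂ) * Complex.I) → False := by
      intro i j hlt heq
      obtain ⟨n, hn⟩ := Complex.exp_eq_exp_iff_exists_int.1 heq
      have hre : (θf i : ℝ) = θf j + n * (2 * Real.pi) := by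
        have := congrArg Complex.im hn
        simpa using this
      obtain ⟨hd1, hd2⟩ := hdiff i j hlt j.isLt
      have hn1 : (n : ℝ) * (2 * Real.pi) = θf (i : ℕ) - θf (j : ℕ) := by linarith
      have hneg : (n : ℝ) < 0 := by nlinarith
      have hgt : (-1 : ℝ) < (n : ℝ) := by nlinarith
      have hneg' : n < 0 := by exact_mod_cast hneg
      have hgt' : (-1 : ℤ) < n := by exact_mod_cast hgt
      omega
    rcases lt_trichotomy ((i : ℕ)) ((j : ℕ)) with h | h | h
    · exact key i j h hij
    · exact hne (Fin.ext h)
    · exact key j i h hij.symm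
  · -- roots
    intro l
    have hid := hfun_eq T hT a ha0 μ hμc hμT (θf l)
    rw [hθf2 l, Complex.ofReal_zero] at hid
    have := hid.symm
    rcases mul_eq_zero.1 this with h | h
    · exfalso
      rcases mul_eq_zero.1 h with h' | h'
      · have : ‖μ‖ = 0 := by rw [h']; simp
        rw [hμ1] at this; norm_num at this
      · exact Complex.exp_ne_zero _ h'
    · exact h

lemma power_sums (T : ℕ) (hT : 1 ≤ T) (pw : ℕ → ℂ)
    (hS : ∑ j ∈ Finset.range T, ‖pw (j + 1)‖ ≤ 1 / 4) :
    ∃ θ : Fin (2 * T) → ℝ, ∀ k : ℕ, 1 ≤ k → k ≤ T →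
      ∑ l : Fin (2 * T), Complex.exp ((θ l : ℂ) * Complex.I) ^ k = pw k := by
  classical
  set a : ℕ → ℂ := aseq pw with ha
  have ha0 : a 0 = 1 := aseq_zero pw
  have hA : ∑ k ∈ Finset.range T, ‖a (k + 1)‖ ≤ 1 / 3 := aseq_sum_bound pw T hS
  obtain ⟨lam, θ, hinj, hroot⟩ := exists_angles T hT a ha0 hA
  set z : Fin (2 * T) → ℂ := fun l => Complex.exp ((θ l : ℂ) * Complex.I) with hz
  refine ⟨θ, ?_⟩
  set Q : Polynomial ℂ := ∏ l : Fin (2 * T), (Polynomial.X - Polynomial.C (z l)) with hQ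
  have hQm : Q.Monic := Polynomial.monic_prod_of_monic _ _ fun l _ => Polynomial.monic_X_sub_C _
  have hQdeg : Q.natDegree = 2 * T := by
    rw [hQ, Polynomial.natDegree_prod_of_monic _ _ fun l _ => Polynomial.monic_X_sub_C _]
    simp
  have hPm : (Qpoly T a lam).Monic := Qpoly_monic T hT a ha0 lam
  have hPdeg : (Qpoly T a lam).natDegree = 2 * T := Qpoly_natDegree T hT a ha0 lam
  -- the two monic polynomials agree
  have heq : Qpoly T a lam = Q := by
    by_contra hne
    have hD : Qpoly T a lam - Q ≠ 0 := sub_ne_zero.2 hne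
    have hdeg : (Qpoly T a lam - Q).degree < (Qpoly T a lam).degree := by
      apply Polynomial.degree_sub_lt
      · rw [Polynomial.degree_eq_natDegree hPm.ne_zero, Polynomial.degree_eq_natDegree hQm.ne_zero,
          hPdeg, hQdeg]
      · exact hPm.ne_zero
      · rw [hPm.leadingCoeff, hQm.leadingCoeff]
    have hDdeg : (Qpoly T a lam - Q).natDegree < 2 * T := by
      have := Polynomial.natDegree_lt_natDegree hD hdeg
      omega
    have hzero := Polynomial.eq_zero_of_natDegree_lt_card_of_eval_eq_zero'
      (Qpoly T a lam - Q) (Finset.image z Finset.univ) ?_ ?_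
    · exact hD hzero
    · intro x hx
      obtain ⟨l, _, rfl⟩ := Finset.mem_image.1 hx
      rw [Polynomial.eval_sub]
      have h1 : Polynomial.eval (z l) Q = 0 := by
        rw [hQ, Polynomial.eval_prod]
        apply Finset.prod_eq_zero (Finset.mem_univ l)
        simp
      rw [h1, hroot l, sub_zero]
    · rw [Finset.card_image_of_injective _ hinj]
      simpa using hDdeg
  -- coefficients of Q via esymm
  have hesymmQ : ∀ m : ℕ, m ≤ T →
      (Finset.univ.val.map z).esymm m = (-1 : ℂ) ^ m * a m := by
    intro m hm
    have hcard : Multiset.card (Finset.univ.val.map z) = 2 * T := by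
      simp
    have h1 : Q.coeff (2 * T - m) = (Finset.univ.val.map fun l => -z l).esymm m := by
      rw [hQ]
      have h2 : ∏ l : Fin (2 * T), (Polynomial.X - Polynomial.C (z l))
          = (Finset.univ.val.map fun l => Polynomial.X + Polynomial.C (-z l)).prod := by
        rw [Finset.prod_eq_multiset_prod]
        congr 1
        apply Multiset.map_congr rfl
        intro l _
        rw [map_neg, sub_eq_add_neg]
      rw [h2]
      have hle : 2 * T - m ≤ Multiset.card ((Finset.univ : Finset (Fin (2 * T))).val) := by simp
      rw [Multiset.prod_X_add_C_coeff' _ _ hle]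
      congr 1
      simp
      omega
    have h3 : (Finset.univ.val.map fun l => -z l).esymm m
        = (-1 : ℂ) ^ m * (Finset.univ.val.map z).esymm m := by
      rw [show (Finset.univ.val.map fun l => -z l) = Multiset.map Neg.neg (Finset.univ.val.map z) by
        rw [Multiset.map_map]; rfl]
      exact Multiset.esymm_neg _ _
    have h4 : Q.coeff (2 * T - m) = a m := by
      rw [← heq]
      exact Qpoly_coeff_high T hT a lam hm
    rw [h4, h3] at h1
    have h5 : ((-1 : ℂ) ^ m) * ((-1 : ℂ) ^ m) = 1 := by
      rw [← pow_add]
      exact Even.neg_one_pow ⟨m, rfl⟩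
    calc (Finset.univ.val.map z).esymm m
        = (((-1 : ℂ) ^ m) * ((-1 : ℂ) ^ m)) * (Finset.univ.val.map z).esymm m := by rw [h5, one_mul]
      _ = (-1 : ℂ) ^ m * a m := by rw [mul_assoc, ← h1]
  have haesymm : ∀ m : ℕ, m ≤ T →
      MvPolynomial.aeval z (MvPolynomial.esymm (Fin (2 * T)) ℂ m) = (-1 : ℂ) ^ m * a m := by
    intro m hm
    rw [MvPolynomial.aeval_esymm_eq_multiset_esymm]
    exact hesymmQ m hm
  have hapsum : ∀ k : ℕ,
      MvPolynomial.aeval z (MvPolynomial.psum (Fin (2 * T)) ℂ k) = ∑ l : Fin (2 * T), z l ^ k := by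
    intro k
    simp [MvPolynomial.psum]
  -- strong induction
  have main : ∀ k : ℕ, k ≤ T → 1 ≤ k → ∑ l : Fin (2 * T), z l ^ k = pw k := by
    intro k
    induction k using Nat.strong_induction_on with
    | _ k IH =>
      intro hkT hk1
      have hnewton := congrArg (MvPolynomial.aeval z)
        (MvPolynomial.psum_eq_mul_esymm_sub_sum (Fin (2 * T)) ℂ k (by omega))
      rw [map_sub, map_mul, map_mul, map_pow, map_neg, map_one, map_natCast, map_sum] at hnewton
      rw [hapsum, haesymm k hkT] at hnewton
      have hterm : ∀ p : ℕ × ℕ, p ∈ Finset.filter (fun p : ℕ × ℕ => p.1 ∈ Set.Ioo 0 k)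
          (Finset.HasAntidiagonal.antidiagonal k) →
          MvPolynomial.aeval z ((-1) ^ p.1 * MvPolynomial.esymm (Fin (2 * T)) ℂ p.1
            * MvPolynomial.psum (Fin (2 * T)) ℂ p.2)
          = a p.1 * pw p.2 := by
        intro p hp
        rw [Finset.mem_filter, Finset.HasAntidiagonal.mem_antidiagonal] at hp
        have hsum := hp.1
        have h0 := hp.2.1
        have hlt := hp.2.2
        rw [map_mul, map_mul, map_pow, map_neg, map_one, haesymm p.1 (by omega), hapsum]
        have hp2 : ∑ l : Fin (2 * T), z l ^ p.2 = pw p.2 := by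
          apply IH p.2 (by omega) (by omega) (by omega)
        rw [hp2]
        have h5 : ((-1 : ℂ) ^ p.1) * ((-1 : ℂ) ^ p.1) = 1 := by
          rw [← pow_add]
          exact Even.neg_one_pow ⟨p.1, rfl⟩
        calc (-1 : ℂ) ^ p.1 * ((-1 : ℂ) ^ p.1 * a p.1) * pw p.2
            = (((-1 : ℂ) ^ p.1) * ((-1 : ℂ) ^ p.1)) * (a p.1 * pw p.2) := by ring
          _ = a p.1 * pw p.2 := by rw [h5, one_mul]
      rw [Finset.sum_congr rfl hterm] at hnewton
      -- convert antidiagonal sum to Ico sum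
      have hconv : ∑ p ∈ Finset.filter (fun p : ℕ × ℕ => p.1 ∈ Set.Ioo 0 k)
          (Finset.HasAntidiagonal.antidiagonal k), a p.1 * pw p.2
          = ∑ i ∈ Finset.Ico 1 k, a i * pw (k - i) := by
        apply Finset.sum_nbij' (fun p => p.1) (fun i => (i, k - i))
        · intro p hp
          rw [Finset.mem_filter, Finset.HasAntidiagonal.mem_antidiagonal] at hp
          rw [Finset.mem_Ico]
          obtain ⟨h0, hlt⟩ := hp.2
          omega
        · intro i hi
          rw [Finset.mem_Ico] at hi
          rw [Finset.mem_filter, Finset.HasAntidiagonal.mem_antidiagonal]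
          constructor
          · omega
          · constructor <;> [omega; omega]
        · intro p hp
          rw [Finset.mem_filter, Finset.HasAntidiagonal.mem_antidiagonal] at hp
          have : p.2 = k - p.1 := by omega
          rw [Prod.ext_iff]
          exact ⟨rfl, this.symm⟩
        · intro i hi
          rfl
        · intro p hp
          rw [Finset.mem_filter, Finset.HasAntidiagonal.mem_antidiagonal] at hp
          have : p.2 = k - p.1 := by omega
          rw [this]
      rw [hconv] at hnewton
      -- simplify the sign
      have hsign : (-1 : ℂ) ^ (k + 1) * (k : ℂ) * ((-1 : ℂ) ^ k * a k) = -((k : ℂ) * a k) := by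
        have : ((-1 : ℂ) ^ (k + 1)) * ((-1 : ℂ) ^ k) = -1 := by
          rw [← pow_add]
          exact Odd.neg_one_pow ⟨k, by ring⟩
        calc (-1 : ℂ) ^ (k + 1) * (k : ℂ) * ((-1 : ℂ) ^ k * a k)
            = (((-1 : ℂ) ^ (k + 1)) * ((-1 : ℂ) ^ k)) * ((k : ℂ) * a k) := by ring
          _ = -((k : ℂ) * a k) := by rw [this]; ring
      rw [hsign] at hnewton
      -- the aseq recursion
      obtain ⟨k', rfl⟩ : ∃ k', k = k' + 1 := ⟨k - 1, by omega⟩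
      have hrec := aseq_newton pw k'
      have hrec2 : ((k' + 1 : ℕ) : ℂ) * a (k' + 1)
          = -∑ j ∈ Finset.Ico 1 (k' + 1 + 1), pw j * a (k' + 1 - j) := by
        push_cast
        rw [hrec]
        congr 1
        rw [Finset.sum_Ico_eq_sum_range]
        simp only [Nat.add_sub_cancel]
        apply Finset.sum_congr rfl
        intro i _
        rw [Nat.add_comm 1 i]
        congr 2
        omega
      have hsplit : ∑ j ∈ Finset.Ico 1 (k' + 1 + 1), pw j * a (k' + 1 - j)
          = ∑ j ∈ Finset.Ico 1 (k' + 1), pw j * a (k' + 1 - j) + pw (k' + 1) := by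
        rw [Finset.sum_Ico_succ_top (by omega : 1 ≤ k' + 1)]
        simp [ha0]
      -- reflection of the Ico sum
      have hrefl : ∑ i ∈ Finset.Ico 1 (k' + 1), a i * pw (k' + 1 - i)
          = ∑ j ∈ Finset.Ico 1 (k' + 1), pw j * a (k' + 1 - j) := by
        apply Finset.sum_nbij' (fun i => k' + 1 - i) (fun j => k' + 1 - j)
        · intro i hi
          rw [Finset.mem_Ico] at hi ⊢
          omega
        · intro j hj
          rw [Finset.mem_Ico] at hj ⊢
          omega
        · intro i hi
          rw [Finset.mem_Ico] at hi
          omega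
        · intro j hj
          rw [Finset.mem_Ico] at hj
          omega
        · intro i hi
          rw [Finset.mem_Ico] at hi
          have h2 : k' + 1 - (k' + 1 - i) = i := by omega
          rw [h2, mul_comm]
      rw [hrefl] at hnewton
      have hcast : ((k' + 1 : ℕ) : ℂ) = ((k' : ℂ) + 1) := by push_cast; ring
      rw [hnewton]
      have := hrec2
      rw [hsplit] at this
      -- now : (k'+1) * a (k'+1) = -(Σ + pw (k'+1))
      have hfin : -(((k' + 1 : ℕ) : ℂ) * a (k' + 1))
          = ∑ j ∈ Finset.Ico 1 (k' + 1), pw j * a (k' + 1 - j) + pw (k' + 1) := by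
        rw [this]; ring
      push_cast at hfin ⊢
      rw [hfin]
      ring
  intro k hk1 hkT
  exact main k hkT hk1

end DTMLI

/-- Local invertibility for the discrete trigonometric moment map: if `T ≥ 1`,
`N ≥ 2T`, and `α ∈ ℂ^T` has ℓ₂ norm at most `1/(8T^{3/2})`, then there are real
angles `θ₁,…,θ_{2T}` with `α_k = (1/(2T))·Σ_{l=1}^{2T} e^{ikθ_l}` for `1 ≤ k ≤ T`. -/
theorem discrete_trig_moment_local_invertibility (T : ℕ) (hT : 1 ≤ T) (N : ℕ)
    (hN : 2 * T ≤ N) (α : Fin T → ℂ)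
    (hα : Real.sqrt (∑ k, ‖α k‖ ^ 2) ≤ 1 / (8 * (T : ℝ) ^ ((3 : ℝ) / 2))) :
    ∃ θ : Fin (2 * T) → ℝ, ∀ k : Fin T,
      α k = (1 / (2 * T : ℂ)) *
        ∑ l, Complex.exp (Complex.I * ((k : ℕ) + 1 : ℕ) * (θ l)) := by
  classical
  have hT0 : (0 : ℝ) < T := by positivity
  have hsqrtT : (0 : ℝ) < Real.sqrt T := Real.sqrt_pos.2 hT0
  -- the power sums to hit
  set pw : ℕ → ℂ := fun j => if h : 1 ≤ j ∧ j ≤ T then (2 * T : ℂ) * α ⟨j - 1, by omega⟩ else 0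
    with hpw
  -- ℓ¹ bound from the ℓ² bound
  have hrpow : (T : ℝ) ^ ((3 : ℝ) / 2) = T * Real.sqrt T := by
    rw [show ((3 : ℝ) / 2) = 1 + 1 / 2 by norm_num, Real.rpow_add hT0, Real.rpow_one]
    congr 1
    rw [Real.sqrt_eq_rpow]
  have hCS : ∑ k : Fin T, ‖α k‖
      ≤ Real.sqrt (∑ k, ‖α k‖ ^ 2) * Real.sqrt T := by
    have h1 := Finset.sum_mul_sq_le_sq_mul_sq Finset.univ (fun k : Fin T => ‖α k‖)
      (fun _ => (1 : ℝ))
    simp only [mul_one, one_pow, Finset.sum_const, Finset.card_univ, Fintype.card_fin,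
      nsmul_eq_mul] at h1
    have h2 : ∑ k : Fin T, ‖α k‖
        ≤ Real.sqrt ((∑ k, ‖α k‖ ^ 2) * T) := by
      rw [show (∑ k, ‖α k‖ ^ 2) * (T:ℝ) = (T:ℝ) * ∑ k, ‖α k‖ ^ 2 by ring]
      apply (Real.le_sqrt (Finset.sum_nonneg fun _ _ => norm_nonneg _)
        (by positivity)).2
      calc (∑ k : Fin T, ‖α k‖) ^ 2
            ≤ (∑ k, ‖α k‖ ^ 2) * (T : ℝ) := h1
          _ = (T : ℝ) * ∑ k, ‖α k‖ ^ 2 := by ring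
    refine h2.trans_eq ?_
    rw [Real.sqrt_mul (Finset.sum_nonneg fun _ _ => sq_nonneg _)]
  have hS : ∑ j ∈ Finset.range T, ‖pw (j + 1)‖ ≤ 1 / 4 := by
    have hsum : ∑ j ∈ Finset.range T, ‖pw (j + 1)‖
        = ∑ i : Fin T, ‖pw ((i : ℕ) + 1)‖ :=
      (Fin.sum_univ_eq_sum_range (fun j => ‖pw (j + 1)‖) T).symm
    have hterm : ∀ i : Fin T, ‖pw ((i : ℕ) + 1)‖ = 2 * (T : ℝ) * ‖α i‖ := by
      intro i
      have hcond : 1 ≤ (i : ℕ) + 1 ∧ (i : ℕ) + 1 ≤ T := ⟨by omega, by omega⟩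
      rw [hpw]
      simp only [dif_pos hcond]
      rw [show (⟨(i : ℕ) + 1 - 1, by omega⟩ : Fin T) = i by
        apply Fin.ext; simp]
      rw [norm_mul]
      congr 1
      rw [show ((2 * T : ℂ)) = (((2 * T : ℝ) : ℝ) : ℂ) by push_cast; ring]
      rw [Complex.norm_real, Real.norm_eq_abs, abs_of_pos (by positivity)]
    rw [hsum, Finset.sum_congr rfl fun i _ => hterm i, ← Finset.mul_sum]
    have hbound : ∑ i : Fin T, ‖α i‖
        ≤ (1 / (8 * ((T : ℝ) * Real.sqrt T))) * Real.sqrt T := by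
      refine hCS.trans ?_
      apply mul_le_mul_of_nonneg_right _ (le_of_lt hsqrtT)
      rw [← hrpow]
      exact hα
    calc 2 * (T : ℝ) * ∑ i : Fin T, ‖α i‖
        ≤ 2 * (T : ℝ) * ((1 / (8 * ((T : ℝ) * Real.sqrt T))) * Real.sqrt T) := by
          apply mul_le_mul_of_nonneg_left hbound (by positivity)
      _ = 1 / 4 := by
          field_simp
          ring
  obtain ⟨θ, hθ⟩ := DTMLI.power_sums T hT pw hS
  refine ⟨θ, ?_⟩
  intro k
  have hk := hθ ((k : ℕ) + 1) (by omega) (by omega)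
  have hcond : 1 ≤ (k : ℕ) + 1 ∧ (k : ℕ) + 1 ≤ T := ⟨by omega, by omega⟩
  have hpwk : pw ((k : ℕ) + 1) = (2 * T : ℂ) * α k := by
    rw [hpw]
    simp only [dif_pos hcond]
    congr 1
  rw [hpwk] at hk
  have hexp : ∀ l : Fin (2 * T), Complex.exp ((θ l : ℂ) * Complex.I) ^ ((k : ℕ) + 1)
      = Complex.exp (Complex.I * (((k : ℕ) + 1 : ℕ) : ℂ) * (θ l : ℂ)) := by
    intro l
    rw [← Complex.exp_nat_mul]
    congr 1
    push_cast
    ring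
  rw [Finset.sum_congr rfl fun l _ => hexp l] at hk
  have h2T : (2 * T : ℂ) ≠ 0 := by
    have : (T : ℂ) ≠ 0 := Nat.cast_ne_zero.2 (by omega)
    simpa using this
  rw [hk]
  field_simp
  exact (mul_div_cancel_right₀ _ (Nat.cast_ne_zero.2 (by omega))).symm
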